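/- Let γ: [0,1] → ℝ² be a rectifiable curve and w a continuous weighting function. Let γ^{(n)} be the piecewise-linear curve interpolating the points γ(i/n) for 0 ≤ i ≤ n. Then the L∞-weighted line integrals ∫_{γ^{(n)}} w ds converge to ∫_γ w ds as n → ∞. -/

import Mathlib

open Filter MeasureTheory

/-- The sup-norm (`L∞`) distance on `ℝ²`. -/
def dinf (p q : ℝ × ℝ) : ℝ := max |p.1 - q.1| |p.2 - q.2|

/-- `HasWLen w γ L` : the curve `γ : [0,1] → ℝ²` has weighted line integral `∫_γ w ds = L`
(w.r.t. `L∞` arc length), as the limit of Riemann-type sums over uniform partitions. -/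
def HasWLen (w : ℝ × ℝ → ℝ) (γ : ℝ → ℝ × ℝ) (L : ℝ) : Prop :=
  Tendsto (fun n : ℕ => ∑ i ∈ Finset.range n,
      dinf (γ (((i : ℝ) + 1) / n)) (γ ((i : ℝ) / n)) * w (γ ((i : ℝ) / n)))
    atTop (nhds L)

/-- The weighted line integral of `w` along the piecewise-linear curve `γ⁽ⁿ⁾` interpolating
the points `γ(i/n)`, `0 ≤ i ≤ n`: the sum of the exact segment integrals. -/
noncomputable def plApproxInt (w : ℝ × ℝ → ℝ) (γ : ℝ → ℝ × ℝ) (n : ℕ) : ℝ :=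
  ∑ i ∈ Finset.range n,
    ∫ t in (0:ℝ)..1,
      w ((1 - t) • γ ((i : ℝ) / n) + t • γ (((i : ℝ) + 1) / n))
        * dinf (γ ((i : ℝ) / n)) (γ (((i : ℝ) + 1) / n))

/-- If `γ` is a rectifiable curve (continuous, with finite `L∞` arc length) whose weighted
line integral (w.r.t. a continuous weighting `w`) is `L`, then the weighted line integrals of
its piecewise-linear interpolations `γ⁽ⁿ⁾` converge to `L` as `n → ∞`. -/
lemma dinf_eq_dist (p q : ℝ × ℝ) : dinf p q = dist p q := by
  rw [Prod.dist_eq, Real.dist_eq, Real.dist_eq]; rfl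

theorem stmt_18 (γ : ℝ → ℝ × ℝ) (w : ℝ × ℝ → ℝ) (L : ℝ)
    (hγ : Continuous γ) (hw : Continuous w)
    (hrect : ∃ C : ℝ, ∀ n : ℕ, ∑ i ∈ Finset.range n,
        dinf (γ (((i : ℝ) + 1) / n)) (γ ((i : ℝ) / n)) ≤ C)
    (hlen : HasWLen w γ L) :
    Tendsto (fun n : ℕ => plApproxInt w γ n) atTop (nhds L) := by
  obtain ⟨C, hC⟩ := hrect
  set S : ℕ → ℝ := fun n => ∑ i ∈ Finset.range n,
      dinf (γ (((i : ℝ) + 1) / n)) (γ ((i : ℝ) / n)) * w (γ ((i : ℝ) / n)) with hSdef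
  -- the compact set containing all relevant points
  set K : Set (ℝ × ℝ) := γ '' Set.Icc 0 1 with hKdef
  have hKcpt : IsCompact K := (isCompact_Icc).image hγ
  set H : Set (ℝ × ℝ) := Metric.cthickening 1 K with hHdef
  have hHcpt : IsCompact H := hKcpt.cthickening
  have hwu : UniformContinuousOn w H :=
    hHcpt.uniformContinuousOn_of_continuous hw.continuousOn
  have hγu : UniformContinuousOn γ (Set.Icc 0 1) :=
    isCompact_Icc.uniformContinuousOn_of_continuous hγ.continuousOn
  have key : Tendsto (fun n => plApproxInt w γ n - S n) atTop (nhds 0) := by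
    rw [Metric.tendsto_atTop]
    intro ε hε
    set ε' : ℝ := ε / (|C| + 1) with hε'def
    have hC1 : (0:ℝ) < |C| + 1 := by positivity
    have hε' : 0 < ε' := div_pos hε hC1
    obtain ⟨δ, hδ, hwδ⟩ := (Metric.uniformContinuousOn_iff.mp hwu) ε' hε'
    obtain ⟨η, hη, hγη⟩ := (Metric.uniformContinuousOn_iff.mp hγu) (min δ 1) (lt_min hδ one_pos)
    obtain ⟨N, hN⟩ := exists_nat_gt (1 / η)
    refine ⟨N + 1, fun n hn => ?_⟩
    have hn0 : 0 < n := lt_of_lt_of_le (Nat.succ_pos N) hn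
    have hn0' : (0:ℝ) < n := by exact_mod_cast hn0
    have hinv : 1 / (n:ℝ) < η := by
      have hNn : 1 / η < (n:ℝ) :=
        lt_of_lt_of_le hN (by exact_mod_cast le_trans (Nat.le_succ N) hn)
      have h1 : (1 / η) * η = 1 := by field_simp
      rw [div_lt_iff₀ hn0']
      nlinarith
    -- per-index facts
    have hmem : ∀ i ∈ Finset.range n, ((i:ℝ)/n ∈ Set.Icc (0:ℝ) 1 ∧
        ((i:ℝ)+1)/n ∈ Set.Icc (0:ℝ) 1) := by
      intro i hi
      have hi' : (i:ℝ) + 1 ≤ n := by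
        have := Finset.mem_range.mp hi
        exact_mod_cast Nat.succ_le_of_lt this
      constructor
      · exact ⟨by positivity, by rw [div_le_one hn0']; linarith⟩
      · exact ⟨by positivity, by rw [div_le_one hn0']; linarith⟩
    -- main term bound
    have hterm : ∀ i ∈ Finset.range n,
        |(∫ t in (0:ℝ)..1,
            w ((1 - t) • γ ((i : ℝ) / n) + t • γ (((i : ℝ) + 1) / n))
              * dinf (γ ((i : ℝ) / n)) (γ (((i : ℝ) + 1) / n)))
          - dinf (γ (((i : ℝ) + 1) / n)) (γ ((i : ℝ) / n)) * w (γ ((i : ℝ) / n))|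
          ≤ ε' * dinf (γ (((i : ℝ) + 1) / n)) (γ ((i : ℝ) / n)) := by
      intro i hi
      obtain ⟨h1, h2⟩ := hmem i hi
      set a := γ ((i : ℝ) / n) with ha
      set b := γ (((i : ℝ) + 1) / n) with hb
      have haK : a ∈ K := ⟨_, h1, rfl⟩
      have hbaδ : dist b a < min δ 1 := by
        apply hγη _ h2 _ h1
        rw [Real.dist_eq]
        have : ((i:ℝ)+1)/n - (i:ℝ)/n = 1/n := by field_simp; ring
        rw [this, abs_of_pos (by positivity)]
        exact hinv
      have hpath : ∀ t ∈ Set.Icc (0:ℝ) 1,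
          |w ((1 - t) • a + t • b) - w a| ≤ ε' := by
        intro t ht
        have hdist : dist ((1 - t) • a + t • b) a ≤ dist b a := by
          have he : (1 - t) • a + t • b - a = t • (b - a) := by module
          rw [dist_eq_norm, he, norm_smul, Real.norm_eq_abs,
            abs_of_nonneg ht.1, dist_eq_norm]
          nlinarith [norm_nonneg (b - a), ht.1, ht.2]
        have hmemH : (1 - t) • a + t • b ∈ H := by
          apply Metric.mem_cthickening_of_dist_le _ a 1 _ haK
          exact hdist.trans (le_of_lt (lt_of_lt_of_le hbaδ (min_le_right _ _)))
        have haH : a ∈ H := Metric.self_subset_cthickening _ haK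
        have := hwδ _ hmemH _ haH
          (lt_of_le_of_lt hdist (lt_of_lt_of_le hbaδ (min_le_left _ _)))
        rw [Real.dist_eq] at this
        exact this.le
      -- integral manipulation
      have hcont : Continuous fun t : ℝ => w ((1 - t) • a + t • b) := by
        apply hw.comp
        exact ((continuous_const.sub continuous_id).smul continuous_const).add
          (continuous_id.smul continuous_const)
      have hint : IntervalIntegrable (fun t : ℝ => w ((1 - t) • a + t • b))
          volume 0 1 := hcont.intervalIntegrable _ _
      have hd : dinf a b = dinf b a := by rw [dinf_eq_dist, dinf_eq_dist, dist_comm]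
      have hIeq : (∫ t in (0:ℝ)..1, w ((1 - t) • a + t • b) * dinf a b)
          = (∫ t in (0:ℝ)..1, w ((1 - t) • a + t • b)) * dinf a b :=
        intervalIntegral.integral_mul_const _ _
      rw [hIeq, hd]
      have hdiff : (∫ t in (0:ℝ)..1, w ((1 - t) • a + t • b)) * dinf b a
          - dinf b a * w a
          = ((∫ t in (0:ℝ)..1, (w ((1 - t) • a + t • b) - w a))) * dinf b a := by
        rw [intervalIntegral.integral_sub hint (intervalIntegrable_const),
          intervalIntegral.integral_const]
        simp only [smul_eq_mul, sub_zero, one_mul]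
        ring
      rw [hdiff, abs_mul]
      have hdnn : 0 ≤ dinf b a := by
        rw [dinf_eq_dist]; exact dist_nonneg
      rw [abs_of_nonneg hdnn]
      apply mul_le_mul_of_nonneg_right _ hdnn
      have := intervalIntegral.norm_integral_le_of_norm_le_const
        (C := ε') (f := fun t => w ((1 - t) • a + t • b) - w a) (a := (0:ℝ)) (b := 1) ?_
      · simpa using this
      · intro t ht
        rw [Set.uIoc_of_le (by norm_num : (0:ℝ) ≤ 1)] at ht
        exact hpath t ⟨ht.1.le, ht.2⟩
    -- sum up
    have hsum : |plApproxInt w γ n - S n| ≤ ε' * C := by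
      rw [plApproxInt, hSdef, ← Finset.sum_sub_distrib]
      calc |∑ i ∈ Finset.range n, _| ≤ _ := Finset.abs_sum_le_sum_abs _ _
        _ ≤ ∑ i ∈ Finset.range n,
              ε' * dinf (γ (((i : ℝ) + 1) / n)) (γ ((i : ℝ) / n)) :=
            Finset.sum_le_sum hterm
        _ = ε' * ∑ i ∈ Finset.range n,
              dinf (γ (((i : ℝ) + 1) / n)) (γ ((i : ℝ) / n)) := by
            rw [Finset.mul_sum]
        _ ≤ ε' * C := mul_le_mul_of_nonneg_left (hC n) hε'.le
    rw [Real.dist_eq, sub_zero]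
    calc |plApproxInt w γ n - S n| ≤ ε' * C := hsum
      _ ≤ ε' * |C| := mul_le_mul_of_nonneg_left (le_abs_self C) hε'.le
      _ < ε' * (|C| + 1) := by nlinarith
      _ = ε := by rw [hε'def]; exact div_mul_cancel₀ ε (ne_of_gt hC1)
  have := key.add hlen
  simp only [hSdef, sub_add_cancel, zero_add] at this
  exact this
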